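/- Let X and Y be independent random variables with X ≥ 0 almost surely and Y > 0 almost surely, and assume E[log(1 + X/Y)] < ∞. Then E[log(1 + X / Y)] = ∫_0^∞ (1/s) · (1 − E[e^{-s X}]) · E[e^{-s Y}] ds. -/

import Mathlib

open MeasureTheory Real ProbabilityTheory Set

lemma aux_int_exp {t : ℝ} (ht : 0 < t) :
    ∫ s in Set.Ioi (0:ℝ), Real.exp (-(t * s)) = 1 / t := by
  have := MeasureTheory.integral_comp_mul_left_Ioi (fun u => Real.exp (-u)) 0 ht
  simp only [mul_zero, smul_eq_mul] at this
  rw [this, integral_exp_neg_Ioi_zero, one_div, mul_one]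

lemma aux_intOn_exp {t : ℝ} (ht : 0 < t) :
    IntegrableOn (fun s => Real.exp (-(t * s))) (Set.Ioi (0:ℝ)) := by
  simpa [neg_mul] using exp_neg_integrableOn_Ioi 0 ht

lemma aux_lint_exp {t : ℝ} (ht : 0 < t) :
    ∫⁻ s in Set.Ioi (0:ℝ), ENNReal.ofReal (Real.exp (-(t * s))) = ENNReal.ofReal (1 / t) := by
  rw [← ofReal_integral_eq_lintegral_ofReal (aux_intOn_exp ht)
    (Filter.Eventually.of_forall fun s => (Real.exp_pos _).le), aux_int_exp ht]

lemma aux_int_t {s y c : ℝ} (hs : 0 < s) (h : y ≤ c) :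
    ∫ t in Set.Ioc y c, Real.exp (-(t * s))
      = (Real.exp (-(y * s)) - Real.exp (-(c * s))) / s := by
  rw [← intervalIntegral.integral_of_le h]
  have hd : ∀ t : ℝ, HasDerivAt (fun u => -Real.exp (-(u * s)) / s) (Real.exp (-(t * s))) t := by
    intro t
    have h1 : HasDerivAt (fun u : ℝ => -(u * s)) (-s) t := by
      have h : HasDerivAt (fun u : ℝ => -(u * s)) (-(1 * s)) t := ((hasDerivAt_id t).mul_const s).neg
      rw [one_mul] at h
      exact h
    have h2 : HasDerivAt (fun u => -Real.exp (-(u * s)) / s) (-(Real.exp (-(t * s)) * -s) / s) t :=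
      (h1.exp).neg.div_const s
    rw [mul_neg, neg_neg, mul_div_assoc, div_self hs.ne', mul_one] at h2
    exact h2
  rw [intervalIntegral.integral_eq_sub_of_hasDerivAt (fun t _ => hd t)
    ((Real.continuous_exp.comp (by continuity)).intervalIntegrable y c)]
  ring

lemma frullani_lint {x y : ℝ} (hx : 0 ≤ x) (hy : 0 < y) :
    ∫⁻ s in Set.Ioi (0:ℝ),
        ENNReal.ofReal ((1 / s) * (1 - Real.exp (-s * x)) * Real.exp (-s * y))
      = ENNReal.ofReal (Real.log (1 + x / y)) := by
  have hyc : y ≤ y + x := le_add_of_nonneg_right hx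
  -- rewrite integrand as inner integral over t
  have step1 : ∀ s ∈ Set.Ioi (0:ℝ),
      ENNReal.ofReal ((1 / s) * (1 - Real.exp (-s * x)) * Real.exp (-s * y))
        = ∫⁻ t in Set.Ioc y (y + x), ENNReal.ofReal (Real.exp (-(t * s))) := by
    intro s hs
    rw [Set.mem_Ioi] at hs
    have hinteg : IntegrableOn (fun t => Real.exp (-(t * s))) (Set.Ioc y (y + x)) :=
      ((Real.continuous_exp.comp (by continuity)).integrableOn_Ioc)
    rw [← ofReal_integral_eq_lintegral_ofReal hinteg
      (Filter.Eventually.of_forall fun t => (Real.exp_pos _).le), aux_int_t hs hyc]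
    congr 1
    have e1 : -(y * s) = -s * y := by ring
    have e2 : Real.exp (-((y + x) * s)) = Real.exp (-s * x) * Real.exp (-s * y) := by
      rw [← Real.exp_add]; ring_nf
    rw [e1, e2]
    field_simp
  rw [setLIntegral_congr_fun measurableSet_Ioi step1]
  -- swap
  rw [lintegral_lintegral_swap]
  · have step2 : ∀ t ∈ Set.Ioc y (y + x),
        ∫⁻ s in Set.Ioi (0:ℝ), ENNReal.ofReal (Real.exp (-(t * s)))
          = ENNReal.ofReal (1 / t) := fun t ht => aux_lint_exp (hy.trans_le ht.1.le)
    rw [setLIntegral_congr_fun measurableSet_Ioc step2]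
    have hinteg : IntegrableOn (fun t => 1 / t) (Set.Ioc y (y + x)) := by
      apply (ContinuousOn.integrableOn_compact isCompact_Icc ?_).mono_set Set.Ioc_subset_Icc_self
      exact ContinuousOn.div continuousOn_const continuousOn_id
        (fun t ht => (hy.trans_le ht.1).ne')
    rw [← ofReal_integral_eq_lintegral_ofReal hinteg ?_]
    · congr 1
      rw [← intervalIntegral.integral_of_le hyc, integral_one_div ?_]
      · congr 1
        field_simp
      · rw [Set.uIcc_of_le hyc]
        intro h0
        exact absurd h0.1 (not_le.mpr hy)
    · exact (ae_restrict_iff' measurableSet_Ioc).2 (Filter.Eventually.of_forall fun t ht =>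
        div_nonneg one_pos.le (hy.trans ht.1).le)
  · apply Measurable.aemeasurable
    apply Measurable.ennreal_ofReal
    exact (Real.continuous_exp.comp (continuous_snd.mul continuous_fst).neg).measurable

lemma exp_facts {Ω : Type*} [MeasurableSpace Ω] (μ : Measure Ω) [IsProbabilityMeasure μ]
    (X : Ω → ℝ) (hXmeas : Measurable X) (hX : ∀ᵐ ω ∂μ, 0 ≤ X ω) {s : ℝ} (hs : 0 < s) :
    Integrable (fun ω => Real.exp (-s * X ω)) μ ∧
    (∫ ω, Real.exp (-s * X ω) ∂μ) ≤ 1 ∧ 0 ≤ ∫ ω, Real.exp (-s * X ω) ∂μ := by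
  have hm : Measurable fun ω => Real.exp (-s * X ω) :=
    Real.continuous_exp.measurable.comp (hXmeas.const_mul (-s))
  have hb : ∀ᵐ ω ∂μ, Real.exp (-s * X ω) ≤ 1 := by
    filter_upwards [hX] with ω h1
    exact Real.exp_le_one_iff.2 (by nlinarith)
  have hi : Integrable (fun ω => Real.exp (-s * X ω)) μ := by
    apply Integrable.mono' (integrable_const 1) hm.aestronglyMeasurable
    filter_upwards [hb] with ω h
    rw [Real.norm_eq_abs, abs_of_pos (Real.exp_pos _)]; exact h
  refine ⟨hi, ?_, integral_nonneg fun ω => (Real.exp_pos _).le⟩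
  calc ∫ ω, Real.exp (-s * X ω) ∂μ ≤ ∫ _, (1:ℝ) ∂μ := integral_mono_ae hi (integrable_const 1) hb
    _ = 1 := by simp

/-- If `X` and `Y` are independent, `X ≥ 0` a.s., `Y > 0` a.s., and
`E[log(1 + X/Y)]` is finite, then
`E[log(1 + X/Y)] = ∫_0^∞ (1/s) ⬝ (1 − E[e^{-s X}]) ⬝ E[e^{-s Y}] ds`. -/
theorem expectation_log_one_add_div_eq_integral_laplace
    {Ω : Type*} [MeasurableSpace Ω] (μ : Measure Ω) [IsProbabilityMeasure μ]
    (X Y : Ω → ℝ) (hXmeas : Measurable X) (hYmeas : Measurable Y)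
    (hindep : IndepFun X Y μ)
    (hX : ∀ᵐ ω ∂μ, 0 ≤ X ω) (hY : ∀ᵐ ω ∂μ, 0 < Y ω)
    (hint : Integrable (fun ω => Real.log (1 + X ω / Y ω)) μ) :
    ∫ ω, Real.log (1 + X ω / Y ω) ∂μ =
      ∫ s in Set.Ioi (0 : ℝ),
        (1 / s) * (1 - ∫ ω, Real.exp (-s * X ω) ∂μ) * ∫ ω, Real.exp (-s * Y ω) ∂μ := by
  have hY' : ∀ᵐ ω ∂μ, 0 ≤ Y ω := by filter_upwards [hY] with ω h; exact h.le
  have hlognn : 0 ≤ᵐ[μ] fun ω => Real.log (1 + X ω / Y ω) := by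
    filter_upwards [hX, hY] with ω h1 h2
    exact Real.log_nonneg (by nlinarith [div_nonneg h1 h2.le])
  -- Step C : for each s > 0, pull independence through
  have stepC : ∀ s ∈ Set.Ioi (0:ℝ),
      ∫⁻ ω, ENNReal.ofReal ((1/s) * (1 - Real.exp (-s * X ω)) * Real.exp (-s * Y ω)) ∂μ
        = ENNReal.ofReal ((1/s) * (1 - ∫ ω, Real.exp (-s * X ω) ∂μ)
            * ∫ ω, Real.exp (-s * Y ω) ∂μ) := by
    intro s hs
    rw [Set.mem_Ioi] at hs
    obtain ⟨hiX, hLX1, _⟩ := exp_facts μ X hXmeas hX hs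
    obtain ⟨hiY, _, _⟩ := exp_facts μ Y hYmeas hY' hs
    have hmX : Measurable fun ω => Real.exp (-s * X ω) :=
      Real.continuous_exp.measurable.comp (hXmeas.const_mul (-s))
    have hmY : Measurable fun ω => Real.exp (-s * Y ω) :=
      Real.continuous_exp.measurable.comp (hYmeas.const_mul (-s))
    have hindep2 : IndepFun (fun ω => 1 - Real.exp (-s * X ω))
        (fun ω => Real.exp (-s * Y ω)) μ :=
      hindep.comp
        (measurable_const.sub (Real.continuous_exp.measurable.comp (measurable_id.const_mul (-s))))
        (Real.continuous_exp.measurable.comp (measurable_id.const_mul (-s)))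
    have hiFull : Integrable
        (fun ω => (1/s) * (1 - Real.exp (-s * X ω)) * Real.exp (-s * Y ω)) μ := by
      apply Integrable.mono' (integrable_const ((1/s) * 1 * 1))
        (((measurable_const.sub hmX).const_mul (1/s)).mul hmY).aestronglyMeasurable
      filter_upwards [hX, hY] with ω h1 h2
      rw [Real.norm_eq_abs]
      have e1 : Real.exp (-s * X ω) ≤ 1 := Real.exp_le_one_iff.2 (by nlinarith)
      have e2 : Real.exp (-s * Y ω) ≤ 1 := Real.exp_le_one_iff.2 (by nlinarith)
      have p1 : (0:ℝ) < Real.exp (-s * X ω) := Real.exp_pos _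
      have p2 : (0:ℝ) < Real.exp (-s * Y ω) := Real.exp_pos _
      have h0 : (0:ℝ) ≤ 1/s := by positivity
      have b2 : (0:ℝ) ≤ 1 - Real.exp (-s * X ω) := by linarith
      have nn : (0:ℝ) ≤ 1/s * (1 - Real.exp (-s * X ω)) * Real.exp (-s * Y ω) :=
        mul_nonneg (mul_nonneg h0 b2) p2.le
      show |1/s * (1 - Real.exp (-s * X ω)) * Real.exp (-s * Y ω)| ≤ 1/s*1*1
      rw [abs_of_nonneg nn]
      exact mul_le_mul (mul_le_mul_of_nonneg_left (by linarith) h0) e2 p2.le (by linarith [h0])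
    have hnn : 0 ≤ᵐ[μ]
        fun ω => (1/s) * (1 - Real.exp (-s * X ω)) * Real.exp (-s * Y ω) := by
      filter_upwards [hX] with ω h1
      have e1 : Real.exp (-s * X ω) ≤ 1 := Real.exp_le_one_iff.2 (by nlinarith)
      have p2 : (0:ℝ) < Real.exp (-s * Y ω) := Real.exp_pos _
      have h0 : (0:ℝ) ≤ 1/s := by positivity
      exact mul_nonneg (mul_nonneg h0 (by linarith)) p2.le
    rw [← ofReal_integral_eq_lintegral_ofReal hiFull hnn]
    congr 1
    simp only [mul_assoc]
    rw [integral_const_mul]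
    congr 1
    rw [hindep2.integral_fun_mul_eq_mul_integral (measurable_const.sub hmX).aestronglyMeasurable
      hmY.aestronglyMeasurable, integral_sub (integrable_const 1) hiX]
    simp
  -- measurability of the joint function
  have hFmeas : AEMeasurable
      (Function.uncurry fun (ω : Ω) (s : ℝ) =>
        ENNReal.ofReal ((1/s) * (1 - Real.exp (-s * X ω)) * Real.exp (-s * Y ω)))
      (μ.prod (volume.restrict (Set.Ioi (0:ℝ)))) := by
    apply Measurable.aemeasurable
    apply Measurable.ennreal_ofReal
    have hXp : Measurable fun p : Ω × ℝ => Real.exp (-p.2 * X p.1) :=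
      Real.continuous_exp.measurable.comp ((measurable_snd.neg).mul (hXmeas.comp measurable_fst))
    have hYp : Measurable fun p : Ω × ℝ => Real.exp (-p.2 * Y p.1) :=
      Real.continuous_exp.measurable.comp ((measurable_snd.neg).mul (hYmeas.comp measurable_fst))
    exact (((measurable_const.div measurable_snd).mul (measurable_const.sub hXp)).mul hYp)
  -- measurability of the Laplace transforms
  have hLX : StronglyMeasurable fun s : ℝ => ∫ ω, Real.exp (-s * X ω) ∂μ := by
    apply StronglyMeasurable.integral_prod_right (f := fun (s : ℝ) (ω : Ω) => Real.exp (-s * X ω))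
    exact (Real.continuous_exp.measurable.comp
      ((measurable_fst.neg).mul (hXmeas.comp measurable_snd))).stronglyMeasurable
  have hLY : StronglyMeasurable fun s : ℝ => ∫ ω, Real.exp (-s * Y ω) ∂μ := by
    apply StronglyMeasurable.integral_prod_right (f := fun (s : ℝ) (ω : Ω) => Real.exp (-s * Y ω))
    exact (Real.continuous_exp.measurable.comp
      ((measurable_fst.neg).mul (hYmeas.comp measurable_snd))).stronglyMeasurable
  have hGmeas : AEStronglyMeasurable
      (fun s : ℝ => (1/s) * (1 - ∫ ω, Real.exp (-s * X ω) ∂μ) * ∫ ω, Real.exp (-s * Y ω) ∂μ)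
      (volume.restrict (Set.Ioi (0:ℝ))) := by
    exact ((((measurable_const.div measurable_id).stronglyMeasurable.mul
      (stronglyMeasurable_const.sub hLX)).mul hLY)).aestronglyMeasurable
  have hGnn : 0 ≤ᵐ[volume.restrict (Set.Ioi (0:ℝ))]
      fun s : ℝ => (1/s) * (1 - ∫ ω, Real.exp (-s * X ω) ∂μ) * ∫ ω, Real.exp (-s * Y ω) ∂μ := by
    apply (ae_restrict_iff' measurableSet_Ioi).2
    refine Filter.Eventually.of_forall fun s hs => ?_
    rw [Set.mem_Ioi] at hs
    obtain ⟨_, hLX1, _⟩ := exp_facts μ X hXmeas hX hs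
    obtain ⟨_, _, hLY0⟩ := exp_facts μ Y hYmeas hY' hs
    have h0 : (0:ℝ) ≤ 1/s := by positivity
    exact mul_nonneg (mul_nonneg h0 (sub_nonneg.2 hLX1)) hLY0
  calc ∫ ω, Real.log (1 + X ω / Y ω) ∂μ
      = (∫⁻ ω, ENNReal.ofReal (Real.log (1 + X ω / Y ω)) ∂μ).toReal :=
        integral_eq_lintegral_of_nonneg_ae hlognn hint.1
    _ = (∫⁻ ω, (∫⁻ s in Set.Ioi (0:ℝ),
          ENNReal.ofReal ((1/s) * (1 - Real.exp (-s * X ω)) * Real.exp (-s * Y ω))) ∂μ).toReal := by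
        congr 1
        apply lintegral_congr_ae
        filter_upwards [hX, hY] with ω h1 h2
        exact (frullani_lint h1 h2).symm
    _ = (∫⁻ s in Set.Ioi (0:ℝ), (∫⁻ ω,
          ENNReal.ofReal ((1/s) * (1 - Real.exp (-s * X ω)) * Real.exp (-s * Y ω)) ∂μ)).toReal := by
        rw [lintegral_lintegral_swap hFmeas]
    _ = (∫⁻ s in Set.Ioi (0:ℝ), ENNReal.ofReal ((1/s) * (1 - ∫ ω, Real.exp (-s * X ω) ∂μ)
          * ∫ ω, Real.exp (-s * Y ω) ∂μ)).toReal := by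
        rw [setLIntegral_congr_fun measurableSet_Ioi stepC]
    _ = ∫ s in Set.Ioi (0:ℝ), (1/s) * (1 - ∫ ω, Real.exp (-s * X ω) ∂μ)
          * ∫ ω, Real.exp (-s * Y ω) ∂μ :=
        (integral_eq_lintegral_of_nonneg_ae hGnn hGmeas).symm
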